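/- Positive definiteness of the impact matrix for strictly convex decay kernels: Let G : ℝ → ℝ be positive, nonincreasing on [0,∞), and strictly convex on [0,∞), and let t₀ < t₁ < ... < t_N be strictly increasing trading times. Then the impact matrix M with entries M_{ij} = G(|t_i − t_j|), 0 ≤ i,j ≤ N, is a symmetric positive-definite matrix: for every nonzero ξ ∈ ℝ^{N+1}, ∑_{i=0}^{N}∑_{j=0}^{N} G(|t_i − t_j|)·ξ_i·ξ_j > 0. -/

import Mathlib

open Matrix MeasureTheory Set

lemma imp_tri_inner (u v a : ℝ) :
    ∫ s, (Ico u (u+a)).indicator (fun _ => (1:ℝ)) s * (Ico v (v+a)).indicator (fun _ => (1:ℝ)) s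
      = max (a - |u - v|) 0 := by
  have h1 : (fun s => (Ico u (u+a)).indicator (fun _ => (1:ℝ)) s * (Ico v (v+a)).indicator (fun _ => (1:ℝ)) s)
      = (Ico u (u+a) ∩ Ico v (v+a)).indicator (fun _ => (1:ℝ)) := by
    rw [show ((fun _ => (1:ℝ)) : ℝ → ℝ) = 1 from rfl, Set.inter_indicator_one]; rfl
  rw [h1, integral_indicator_const (1:ℝ) ((measurableSet_Ico).inter measurableSet_Ico)]
  rw [Set.Ico_inter_Ico, Real.volume_real_Ico, smul_eq_mul, mul_one]
  congr 1
  rw [min_add_add_right, abs_sub_comm]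
  rw [← max_sub_min_eq_abs]
  ring

lemma imp_tri_integrable (u v a : ℝ) :
    Integrable (fun s => (Ico u (u+a)).indicator (fun _ => (1:ℝ)) s * (Ico v (v+a)).indicator (fun _ => (1:ℝ)) s) := by
  have h1 : (fun s => (Ico u (u+a)).indicator (fun _ => (1:ℝ)) s * (Ico v (v+a)).indicator (fun _ => (1:ℝ)) s)
      = (Ico u (u+a) ∩ Ico v (v+a)).indicator (fun _ => (1:ℝ)) := by
    rw [show ((fun _ => (1:ℝ)) : ℝ → ℝ) = 1 from rfl, Set.inter_indicator_one]; rfl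
  rw [h1, integrable_indicator_iff ((measurableSet_Ico).inter measurableSet_Ico)]
  exact integrableOn_const (lt_of_le_of_lt (measure_mono (Set.inter_subset_left)) measure_Ico_lt_top).ne

lemma imp_tri_psd {n : ℕ} (t : Fin n → ℝ) (x : Fin n → ℝ) (a : ℝ) :
    0 ≤ ∑ i, ∑ j, max (a - |t i - t j|) 0 * (x i * x j) := by
  set f : Fin n → ℝ → ℝ := fun i s => x i * (Ico (t i) (t i + a)).indicator (fun _ => (1:ℝ)) s with hf
  have hint : ∀ i j : Fin n, Integrable (fun s => f i s * f j s) := by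
    intro i j
    have := (imp_tri_integrable (t i) (t j) a).const_mul (x i * x j)
    refine this.congr (Filter.Eventually.of_forall fun s => ?_)
    simp only [f]; ring
  have key : ∀ i j : Fin n, ∫ s, f i s * f j s = max (a - |t i - t j|) 0 * (x i * x j) := by
    intro i j
    have := imp_tri_inner (t i) (t j) a
    calc ∫ s, f i s * f j s
        = ∫ s, (x i * x j) * ((Ico (t i) (t i+a)).indicator (fun _ => (1:ℝ)) s * (Ico (t j) (t j+a)).indicator (fun _ => (1:ℝ)) s) := by
          congr 1; funext s; simp [f]; ring
      _ = (x i * x j) * ∫ s, ((Ico (t i) (t i+a)).indicator (fun _ => (1:ℝ)) s * (Ico (t j) (t j+a)).indicator (fun _ => (1:ℝ)) s) := by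
          exact integral_const_mul _ _
      _ = max (a - |t i - t j|) 0 * (x i * x j) := by rw [this]; ring
  have expand : ∀ s : ℝ, (∑ i, f i s)^2 = ∑ i, ∑ j, f i s * f j s := by
    intro s
    rw [sq, Finset.sum_mul_sum]
  have h0 : 0 ≤ ∫ s, (∑ i, f i s)^2 := integral_nonneg (fun s => sq_nonneg _)
  have h1 : ∫ s, (∑ i, f i s)^2 = ∑ i, ∑ j, max (a - |t i - t j|) 0 * (x i * x j) := by
    calc ∫ s, (∑ i, f i s)^2 = ∫ s, ∑ i, ∑ j, f i s * f j s := by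
          congr 1; funext s; exact expand s
      _ = ∑ i, ∑ j, ∫ s, f i s * f j s := by
          rw [integral_finset_sum _ (fun i _ => integrable_finset_sum _ (fun j _ => hint i j))]
          exact Finset.sum_congr rfl (fun i _ => integral_finset_sum _ (fun j _ => hint i j))
      _ = _ := Finset.sum_congr rfl (fun i _ => Finset.sum_congr rfl (fun j _ => key i j))
  linarith [h1 ▸ h0]



private lemma imp_telescope (φ : ℕ → ℝ) : ∀ m j : ℕ, j ≤ m →
    ∑ k ∈ Finset.Ioc j m, (φ (k+1) - φ k) = φ (m+1) - φ (j+1) := by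
  intro m
  induction m with
  | zero => intro j hj; interval_cases j; simp [Finset.Ioc_self]
  | succ m ih =>
    intro j hj
    rcases Nat.lt_or_ge j (m+1) with h | h
    · have hjm : j ≤ m := Nat.lt_succ_iff.mp h
      rw [Finset.sum_Ioc_succ_top hjm, ih j hjm]
      ring
    · have : j = m + 1 := le_antisymm hj h
      subst this; simp [Finset.Ioc_self]


private lemma imp_strict_dec (G : ℝ → ℝ)
    (hGmono : ∀ s s' : ℝ, 0 ≤ s → s ≤ s' → G s' ≤ G s)
    (hGconv : StrictConvexOn ℝ (Set.Ici (0 : ℝ)) G)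
    {a b : ℝ} (ha : 0 ≤ a) (hab : a < b) : G b < G a := by
  have hb : 0 ≤ b := ha.trans hab.le
  have hbs : b < b + 1 := by linarith
  have h1 : (G b - G a) / (b - a) < (G (b+1) - G b) / ((b+1) - b) :=
    hGconv.slope_strict_mono_adjacent ha (by simp; linarith) hab hbs
  have h2 : G (b+1) ≤ G b := hGmono b (b+1) hb hbs.le
  have hba : 0 < b - a := by linarith
  have h3 : (G (b+1) - G b) / ((b+1) - b) ≤ 0 :=
    div_nonpos_of_nonpos_of_nonneg (by linarith) (by linarith)
  have h4 : (G b - G a) / (b - a) < 0 := lt_of_lt_of_le h1 h3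
  rcases div_neg_iff.mp h4 with ⟨_, h⟩ | ⟨h, _⟩
  · linarith
  · linarith
private lemma imp_quad_pos
    (N : ℕ) (t : Fin (N + 1) → ℝ) (ht : StrictMono t)
    (G : ℝ → ℝ)
    (hGpos : ∀ s : ℝ, 0 ≤ s → 0 < G s)
    (hGmono : ∀ s s' : ℝ, 0 ≤ s → s ≤ s' → G s' ≤ G s)
    (hGconv : StrictConvexOn ℝ (Set.Ici (0 : ℝ)) G)
    (ξ : Fin (N + 1) → ℝ) (hξ : ξ ≠ 0) :
    0 < ∑ i, ∑ j, G |t i - t j| * ξ i * ξ j := by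
  have hGdec : ∀ {a b : ℝ}, 0 ≤ a → a < b → G b < G a :=
    fun ha hab => imp_strict_dec G hGmono hGconv ha hab
  obtain ⟨i₀, hi₀⟩ : ∃ i, ξ i ≠ 0 := Function.ne_iff.mp hξ
  set D : Finset ℝ := Finset.image (fun p : Fin (N+1) × Fin (N+1) => |t p.1 - t p.2|) Finset.univ with hD
  have h0D : (0:ℝ) ∈ D := by
    rw [hD]; exact Finset.mem_image.mpr ⟨(0,0), Finset.mem_univ _, by simp⟩
  have hDnn : ∀ r ∈ D, (0:ℝ) ≤ r := by
    intro r hr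
    rw [hD] at hr
    obtain ⟨p, _, rfl⟩ := Finset.mem_image.mp hr
    exact abs_nonneg _
  have hDmem : ∀ i j : Fin (N+1), |t i - t j| ∈ D := fun i j =>
    Finset.mem_image.mpr ⟨(i,j), Finset.mem_univ _, rfl⟩
  have hDne : D.Nonempty := ⟨0, h0D⟩
  have hDc : D.card ≠ 0 := Finset.card_ne_zero.mpr hDne
  set m : ℕ := D.card - 1 with hm
  have hcard : D.card = m + 1 := by omega
  set e : Fin (m+1) → ℝ := fun k => (D.orderIsoOfFin hcard k : ℝ) with he
  have heStrict : StrictMono e := fun a b hab => by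
    exact_mod_cast (D.orderIsoOfFin hcard).strictMono hab
  have heMem : ∀ k, e k ∈ D := fun k => (D.orderIsoOfFin hcard k).2
  have heSurj : ∀ r ∈ D, ∃ k : Fin (m+1), e k = r := by
    intro r hr
    exact ⟨(D.orderIsoOfFin hcard).symm ⟨r, hr⟩,
      congrArg Subtype.val ((D.orderIsoOfFin hcard).apply_symm_apply ⟨r, hr⟩)⟩
  set d : ℕ → ℝ := fun k => e ⟨min k m, Nat.lt_succ_of_le (min_le_right _ _)⟩ with hd
  have hdmono : ∀ {a b : ℕ}, a ≤ b → d a ≤ d b := by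
    intro a b hab
    exact heStrict.monotone (by simp [Fin.le_def]; omega)
  have hdstrict : ∀ {a b : ℕ}, a < b → b ≤ m → d a < d b := by
    intro a b hab hbm
    exact heStrict (by simp [Fin.lt_def]; omega)
  have hdmem : ∀ k, d k ∈ D := fun k => heMem _
  have hdnn : ∀ k, 0 ≤ d k := fun k => hDnn _ (hdmem k)
  have hd0 : d 0 = 0 := by
    obtain ⟨k, hk⟩ := heSurj 0 h0D
    have h1 : d 0 ≤ e k := by
      have : (⟨min 0 m, Nat.lt_succ_of_le (min_le_right _ _)⟩ : Fin (m+1)) ≤ k := by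
        simp [Fin.le_def]
      exact heStrict.monotone this
    have h2 := hdnn 0
    rw [hk] at h1
    linarith
  have hdsurj : ∀ r ∈ D, ∃ k ≤ m, d k = r := by
    intro r hr
    obtain ⟨k, hk⟩ := heSurj r hr
    refine ⟨k.1, Nat.lt_succ_iff.mp k.2, ?_⟩
    rw [hd]
    convert hk using 3
    simp [Fin.ext_iff, Nat.min_eq_left (Nat.lt_succ_iff.mp k.2)]
  -- slopes and weights
  set β : ℕ → ℝ := fun k => if 1 ≤ k ∧ k ≤ m then (G (d k) - G (d (k-1))) / (d k - d (k-1)) else 0 with hβ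
  set μ : ℕ → ℝ := fun k => β (k+1) - β k with hμ
  have hμk : ∀ k, μ k = β (k+1) - β k := fun _ => rfl
  set c : ℝ := G (d m) with hc
  have hcpos : 0 < c := hGpos _ (hdnn m)
  have hβneg : ∀ k, 1 ≤ k → k ≤ m → β k < 0 := by
    intro k h1 h2
    rw [hβ]
    simp only [if_pos (And.intro h1 h2)]
    apply div_neg_of_neg_of_pos
    · have := hGdec (hdnn (k-1)) (hdstrict (by omega) h2)
      linarith
    · have := hdstrict (show k - 1 < k by omega) h2
      linarith
  have hμpos : ∀ k, 1 ≤ k → k ≤ m → 0 < μ k := by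
    intro k h1 h2
    rcases Nat.lt_or_ge k m with hk | hk
    · -- strict convexity: β k < β (k+1)
      have hmem1 : d (k-1) ∈ Set.Ici (0:ℝ) := hdnn _
      have hmem2 : d (k+1) ∈ Set.Ici (0:ℝ) := hdnn _
      have hlt1 : d (k-1) < d k := hdstrict (by omega) h2
      have hlt2 : d k < d (k+1) := hdstrict (by omega) (by omega)
      have := hGconv.slope_strict_mono_adjacent hmem1 hmem2 hlt1 hlt2
      rw [hμ, hβ]
      simp only [if_pos (And.intro h1 h2), if_pos (And.intro (by omega : 1 ≤ k+1) (by omega : k+1 ≤ m))]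
      have hk1 : k + 1 - 1 = k := by omega
      rw [hk1]
      linarith
    · -- k = m : μ m = -β m
      have hkm : k = m := by omega
      have : β (k+1) = 0 := by
        rw [hβ]; simp only [ite_eq_right_iff]; intro h; omega
      rw [hμk, this]
      have := hβneg k h1 h2
      linarith
  -- key representation
  have hrep : ∀ r ∈ D, G r = c + ∑ k ∈ Finset.Icc 1 m, μ k * max (d k - r) 0 := by
    intro r hr
    obtain ⟨j, hjm, rfl⟩ := hdsurj r hr
    have hsub : Finset.Ioc j m ⊆ Finset.Icc 1 m := by
      intro k hk
      simp only [Finset.mem_Ioc] at hk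
      simp only [Finset.mem_Icc]
      omega
    have hzero : ∀ k ∈ Finset.Icc 1 m, k ∉ Finset.Ioc j m → μ k * max (d k - d j) 0 = 0 := by
      intro k hk hk'
      simp only [Finset.mem_Icc] at hk
      simp only [Finset.mem_Ioc] at hk'
      have hkj : k ≤ j := by omega
      have : d k ≤ d j := hdmono hkj
      rw [max_eq_right (by linarith)]
      ring
    rw [← Finset.sum_subset hsub hzero]
    have hterm : ∀ k ∈ Finset.Ioc j m, μ k * max (d k - d j) 0
        = ((β (k+1) * (d ((k+1)-1) - d j) - β k * (d (k-1) - d j))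
          - (G (d ((k+1)-1)) - G (d (k-1)))) := by
      intro k hk
      simp only [Finset.mem_Ioc] at hk
      have h1k : 1 ≤ k := by omega
      have hkm : k ≤ m := hk.2
      have hk1 : k + 1 - 1 = k := by omega
      rw [hk1]
      have hdj : d j ≤ d k := hdmono (by omega)
      rw [max_eq_left (by linarith)]
      have hne : d k - d (k-1) ≠ 0 := by
        have := hdstrict (show k - 1 < k by omega) hkm
        linarith
      have hβk : β k = (G (d k) - G (d (k-1))) / (d k - d (k-1)) := by
        rw [hβ]; simp only [if_pos (And.intro h1k hkm)]
      rw [hμk, hβk]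
      field_simp
      ring
    rw [Finset.sum_congr rfl hterm, Finset.sum_sub_distrib,
        imp_telescope (fun k => β k * (d (k-1) - d j)) m j hjm,
        imp_telescope (fun k => G (d (k-1))) m j hjm]
    have hβm1 : β (m+1) = 0 := by
      rw [hβ]; simp only [ite_eq_right_iff]; intro h; omega
    have : (m+1) - 1 = m := by omega
    rw [this, hβm1]
    have : (j+1) - 1 = j := by omega
    rw [this]
    rw [hc]
    ring
    -- the quadratic forms attached to the triangle kernels
  set T : ℕ → ℝ := fun k => ∑ i, ∑ j, max (d k - |t i - t j|) 0 * (ξ i * ξ j) with hT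
  have hTnn : ∀ k, 0 ≤ T k := fun k => imp_tri_psd t ξ (d k)
  by_cases hm1 : 1 ≤ m
  · -- main case
    have hpt : ∀ i j : Fin (N+1), G |t i - t j| * ξ i * ξ j
        = c * (ξ i * ξ j) + ∑ k ∈ Finset.Icc 1 m, μ k * (max (d k - |t i - t j|) 0 * (ξ i * ξ j)) := by
      intro i j
      rw [hrep _ (hDmem i j), add_mul, add_mul, Finset.sum_mul, Finset.sum_mul]
      congr 1
      · ring
      · exact Finset.sum_congr rfl (fun k _ => by ring)
    have hsplit : ∑ i, ∑ j, G |t i - t j| * ξ i * ξ j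
        = (∑ i, ∑ j, c * (ξ i * ξ j))
          + ∑ i, ∑ j, ∑ k ∈ Finset.Icc 1 m, μ k * (max (d k - |t i - t j|) 0 * (ξ i * ξ j)) := by
      rw [← Finset.sum_add_distrib]
      refine Finset.sum_congr rfl (fun i _ => ?_)
      rw [← Finset.sum_add_distrib]
      exact Finset.sum_congr rfl (fun j _ => hpt i j)
    have hA : 0 ≤ ∑ i, ∑ j, c * (ξ i * ξ j) := by
      have : ∑ i, ∑ j, c * (ξ i * ξ j) = c * ((∑ i, ξ i) * (∑ i, ξ i)) := by
        rw [Finset.sum_mul_sum, Finset.mul_sum]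
        exact Finset.sum_congr rfl (fun i _ => by rw [Finset.mul_sum])
      rw [this]
      exact mul_nonneg hcpos.le (mul_self_nonneg _)
    have hB : ∑ i, ∑ j, ∑ k ∈ Finset.Icc 1 m, μ k * (max (d k - |t i - t j|) 0 * (ξ i * ξ j))
        = ∑ k ∈ Finset.Icc 1 m, μ k * T k := by
      calc ∑ i, ∑ j, ∑ k ∈ Finset.Icc 1 m, μ k * (max (d k - |t i - t j|) 0 * (ξ i * ξ j))
          = ∑ i, ∑ k ∈ Finset.Icc 1 m, ∑ j, μ k * (max (d k - |t i - t j|) 0 * (ξ i * ξ j)) :=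
            Finset.sum_congr rfl (fun i _ => Finset.sum_comm)
        _ = ∑ k ∈ Finset.Icc 1 m, ∑ i, ∑ j, μ k * (max (d k - |t i - t j|) 0 * (ξ i * ξ j)) :=
            Finset.sum_comm
        _ = ∑ k ∈ Finset.Icc 1 m, μ k * T k := by
            refine Finset.sum_congr rfl (fun k _ => ?_)
            rw [hT, Finset.mul_sum]
            exact Finset.sum_congr rfl (fun i _ => by rw [Finset.mul_sum])
    have hterms : ∀ k ∈ Finset.Icc 1 m, 0 ≤ μ k * T k := by
      intro k hk
      simp only [Finset.mem_Icc] at hk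
      exact mul_nonneg (hμpos k hk.1 hk.2).le (hTnn k)
    have h1mem : (1:ℕ) ∈ Finset.Icc 1 m := by simp [hm1]
    have hsingle : μ 1 * T 1 ≤ ∑ k ∈ Finset.Icc 1 m, μ k * T k :=
      Finset.single_le_sum hterms h1mem
    -- T 1 is d 1 times the sum of squares
    have hd1pos : 0 < d 1 := by
      have := hdstrict (show (0:ℕ) < 1 by norm_num) hm1
      rwa [hd0] at this
    have hoff : ∀ i j : Fin (N+1), i ≠ j → max (d 1 - |t i - t j|) 0 = 0 := by
      intro i j hij
      obtain ⟨k, hkm, hk⟩ := hdsurj _ (hDmem i j)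
      have htne : t i ≠ t j := fun h => hij (ht.injective h)
      have hpos : 0 < |t i - t j| := abs_pos.mpr (sub_ne_zero.mpr htne)
      have hk0 : k ≠ 0 := by
        intro h
        rw [h, hd0] at hk
        exact hpos.ne hk
      have : d 1 ≤ d k := hdmono (by omega)
      rw [hk] at this
      exact max_eq_right (by linarith)
    have hT1 : T 1 = ∑ i, d 1 * (ξ i * ξ i) := by
      rw [hT]
      refine Finset.sum_congr rfl (fun i _ => ?_)
      rw [Finset.sum_eq_single i]
      · rw [sub_self, abs_zero, sub_zero, max_eq_left hd1pos.le]
      · intro j _ hji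
        rw [hoff i j (fun h => hji h.symm), zero_mul]
      · intro h
        exact absurd (Finset.mem_univ i) h
    have hT1pos : 0 < T 1 := by
      rw [hT1]
      refine Finset.sum_pos' (fun i _ => mul_nonneg hd1pos.le (mul_self_nonneg _)) ⟨i₀, Finset.mem_univ _, ?_⟩
      exact mul_pos hd1pos (mul_self_pos.mpr hi₀)
    have hμ1T1 : 0 < μ 1 * T 1 := mul_pos (hμpos 1 le_rfl hm1) hT1pos
    rw [hsplit, hB]
    linarith
  · -- degenerate case : all times equal, so N = 0 effectively
    have hm0 : m = 0 := by omega
    have hall : ∀ i j : Fin (N+1), i = j := by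
      intro i j
      obtain ⟨k, hkm, hk⟩ := hdsurj _ (hDmem i j)
      have : k = 0 := by omega
      rw [this, hd0] at hk
      have : t i = t j := by
        have := abs_eq_zero.mp hk.symm
        linarith
      exact ht.injective this
    have huniv : (Finset.univ : Finset (Fin (N+1))) = {i₀} := by
      ext a
      simp [hall a i₀]
    rw [huniv]
    simp only [Finset.sum_singleton]
    rw [sub_self, abs_zero, mul_assoc]
    exact mul_pos (hGpos 0 le_rfl) (mul_self_pos.mpr hi₀)

/-- **Positive definiteness of the impact matrix for strictly convex decay kernels.**
If `G` is positive, nonincreasing and strictly convex on `[0,∞)`, and the trading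
times are strictly increasing, then the impact matrix `M i j = G(|tᵢ − tⱼ|)` is
symmetric positive definite; in particular the quadratic form
`∑ᵢ∑ⱼ G(|tᵢ − tⱼ|)·ξᵢ·ξⱼ` is strictly positive for every nonzero `ξ`. -/
theorem impact_matrix_posdef
    (N : ℕ) (t : Fin (N + 1) → ℝ) (ht : StrictMono t)
    (G : ℝ → ℝ)
    (hGpos : ∀ s : ℝ, 0 ≤ s → 0 < G s)
    (hGmono : ∀ s s' : ℝ, 0 ≤ s → s ≤ s' → G s' ≤ G s)
    (hGconv : StrictConvexOn ℝ (Set.Ici (0 : ℝ)) G)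
    (M : Matrix (Fin (N + 1)) (Fin (N + 1)) ℝ)
    (hM : M = Matrix.of fun i j => G |t i - t j|) :
    M.IsSymm ∧ M.PosDef ∧
      ∀ ξ : Fin (N + 1) → ℝ, ξ ≠ 0 →
        0 < ∑ i, ∑ j, G |t i - t j| * ξ i * ξ j := by
  have hquad := imp_quad_pos N t ht G hGpos hGmono hGconv
  have hsymm : M.IsSymm := by
    subst hM
    ext i j
    simp [Matrix.transpose_apply, abs_sub_comm]
  refine ⟨hsymm, ⟨?_, ?_⟩, fun ξ hξ => hquad ξ hξ⟩
  · ext i j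
    subst hM
    simp [Matrix.conjTranspose_apply, abs_sub_comm]
  · intro x hx
    have hq := hquad x (fun h => hx (Finsupp.coe_eq_zero.mp h))
    subst hM
    have hexp : (x.sum fun i xi => x.sum fun j xj => star xi * (Matrix.of fun i j => G |t i - t j|) i j * xj)
        = ∑ i, ∑ j, G |t i - t j| * x i * x j := by
      rw [Finsupp.sum_fintype _ _ (by simp)]
      refine Finset.sum_congr rfl (fun i _ => ?_)
      rw [Finsupp.sum_fintype _ _ (by simp)]
      exact Finset.sum_congr rfl (fun j _ => by simp only [Matrix.of_apply, star_trivial]; ring)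
    rw [hexp]; exact hq
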